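/- Assume the α_i are pairwise distinct and fix a monomial term order ⪯ on k[z_1,…,z_n]. For an interval [x,y] in Λ, totally order the saturated chains of [x,y] by: F < G iff the content of F strictly ⪯-precedes the content of G, or the contents are equal and the label sequence of F is lexicographically smaller than that of G (individual labels compared by ⪯). Then this ordering satisfies the crossing condition: for all saturated chains F = (x = μ_0 ⋖ μ_1 ⋖ ⋯ ⋖ μ_r = y) and G of [x,y] with G < F, if the set of ranks {t ∈ {0,…,r} : μ_t ∉ G} is not a set of consecutive integers, then there exists a saturated chain G′ of [x,y] with G′ < F and (F ∩ G) ⊊ (F ∩ G′), where intersections are taken as sets of poset elements. -/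

import Mathlib

open scoped Classical

noncomputable section

namespace ASG

variable {e n : ℕ}

/-- Ambient monoid `ℕ^e`. -/
abbrev M (e : ℕ) : Type := Fin e →₀ ℕ

/-- The affine semigroup `Λ` generated by `α 1, …, α n`. -/
def sg (α : Fin n → M e) : AddSubmonoid (M e) :=
  AddSubmonoid.closure (Set.range α)

/-- The partial order on `Λ` : `μ ≤ ν` iff `ν - μ ∈ Λ`. -/
def sgLE (α : Fin n → M e) (μ ν : M e) : Prop := ∃ δ ∈ sg α, μ + δ = ν

/-- Strict version of the order on `Λ`. -/
def sgLT (α : Fin n → M e) (μ ν : M e) : Prop := sgLE α μ ν ∧ μ ≠ ν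

/-- `deg λ` : the least `r` such that `λ` is a sum of `r` generators. -/
def deg (α : Fin n → M e) (l : M e) : ℕ :=
  sInf {r : ℕ | ∃ w : Fin r → Fin n, l = ∑ t, α (w t)}

/-- Comparability in the poset `Λ`. -/
def cmp2 (α : Fin n → M e) (a b : M e) : Prop := sgLE α a b ∨ sgLE α b a

/-- Faces of the order complex `Δ(x,y)` of the open interval `(x,y)` in `Λ`:
finite chains of elements strictly between `x` and `y`. -/
def IsOFace (α : Fin n → M e) (x y : M e) (S : Finset (M e)) : Prop :=
  (∀ μ ∈ S, μ ∈ sg α ∧ sgLT α x μ ∧ sgLT α μ y) ∧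
    (S : Set (M e)).Pairwise (cmp2 α)

/-- Faces with `m` vertices (i.e. of dimension `m - 1`). -/
def OFace (α : Fin n → M e) (x y : M e) (m : ℕ) : Type :=
  { S : Finset (M e) // IsOFace α x y S ∧ S.card = m }

/-- The simplicial chain group with coefficients in `K` spanned by the faces
with `m` vertices (the augmented/reduced chain complex: for `m = 0` this is a
copy of `K` spanned by the empty face). -/
abbrev OC (K : Type) [Field K] (α : Fin n → M e) (x y : M e) (m : ℕ) : Type :=
  OFace α x y m →₀ K

/-- Deleting a vertex from a face. -/
def erasedOFace {α : Fin n → M e} {x y : M e} {m : ℕ} (S : OFace α x y m)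
    (v : M e) (hv : v ∈ S.1) : OFace α x y (m - 1) :=
  ⟨S.1.erase v,
    ⟨fun μ hμ => S.2.1.1 μ (Finset.mem_of_mem_erase hμ),
      S.2.1.2.mono (Finset.coe_subset.mpr (Finset.erase_subset _ _))⟩,
    by rw [Finset.card_erase_of_mem hv, S.2.2]⟩

/-- The simplicial boundary map of the (augmented) chain complex of `Δ(x,y)`;
the sign of the deletion of a vertex `v` is `(-1)^(number of vertices below v)`. -/
def obd (K : Type) [Field K] (α : Fin n → M e) (x y : M e) (m : ℕ) :
    OC K α x y m →ₗ[K] OC K α x y (m - 1) :=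
  Finsupp.linearCombination K fun S : OFace α x y m =>
    ∑ v ∈ S.1.attach,
      ((-1 : K) ^ (S.1.filter fun w => sgLT α w v.1).card) •
        Finsupp.single (erasedOFace S v.1 v.2) 1

/-- Vanishing of the reduced simplicial homology `H̃_i(Δ(x,y); K)`, for `i : ℤ`:
every reduced `i`-cycle is a boundary.  (An `i`-dimensional face has `i + 1`
vertices; for `i ≤ -2` the statement is vacuous, as is the reduced homology.) -/
def HredVanishes (K : Type) [Field K] (α : Fin n → M e) (x y : M e) (i : ℤ) : Prop :=
  ∀ m : ℕ, (m : ℤ) = i + 1 →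
    ∀ c : OC K α x y m, obd K α x y m c = 0 →
      ∃ b : OC K α x y (m + 1), obd K α x y (m + 1) b = c

/-- The reduced simplicial homology group `H̃_(m-1)(Δ(x,y); K)` :
cycles in the chain group spanned by faces with `m` vertices modulo boundaries,
realized as the image of the cycles in the cokernel of the boundary map. -/
abbrev HredMod (K : Type) [Field K] (α : Fin n → M e) (x y : M e) (m : ℕ) : Type :=
  ↥(Submodule.map (Submodule.mkQ (LinearMap.range (obd K α x y (m + 1))))
      (LinearMap.ker (obd K α x y m)))

end ASG
namespace ASG

variable {e n : ℕ}

/-- The toric ideal `I_Λ = ker φ ⊆ k[z_1, …, z_n]`, where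
`φ(z_i) = x^(α i) ∈ k[Λ] ⊆ k[x_1, …, x_e]`. -/
def toricIdeal (k : Type) [Field k] (α : Fin n → M e) : Ideal (MvPolynomial (Fin n) k) :=
  RingHom.ker (MvPolynomial.aeval (R := k)
    fun i : Fin n => (MvPolynomial.monomial (α i) 1 : MvPolynomial (Fin e) k))

/-- A monomial term order on `k[z_1, …, z_n]` (monomials identified with their
exponent vectors in `ℕ^n`): a linear order such that `1` is least and which is
compatible with multiplication of monomials. -/
def IsTermOrder (ord : LinearOrder (Fin n →₀ ℕ)) : Prop :=
  (∀ a, ord.le 0 a) ∧ ∀ a b c, ord.le a b → ord.le (a + c) (b + c)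

/-- The initial ideal `in_⪯(I_Λ)`: the ideal generated by the `⪯`-leading
monomials of the nonzero elements of `I_Λ`. -/
def initialIdeal (k : Type) [Field k] (ord : LinearOrder (Fin n →₀ ℕ)) (α : Fin n → M e) :
    Ideal (MvPolynomial (Fin n) k) :=
  Ideal.span {p | ∃ f ∈ toricIdeal k α, f ≠ 0 ∧ ∃ mo : Fin n →₀ ℕ,
    (mo ∈ f.support ∧ ∀ m' ∈ f.support, ord.le m' mo) ∧ p = MvPolynomial.monomial mo 1}

/-- `I_Λ` has a Gröbner basis of degree `d` with respect to `⪯` iff `in_⪯(I_Λ)`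
is generated by monomials of total degree at most `d`. -/
def HasGB (k : Type) [Field k] (ord : LinearOrder (Fin n →₀ ℕ)) (α : Fin n → M e)
    (d : ℕ) : Prop :=
  ∃ G : Set (Fin n →₀ ℕ), (∀ mo ∈ G, (mo.sum fun _ c => c) ≤ d) ∧
    Ideal.span ((fun mo => (MvPolynomial.monomial mo 1 : MvPolynomial (Fin n) k)) '' G)
      = initialIdeal k ord α

end ASG
namespace ASG

variable {e n : ℕ}

/-- A saturated chain `x = μ_0 ⋖ μ_1 ⋖ ⋯ ⋖ μ_r = y` of the interval `[x,y]` of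
`Λ`, together with its label sequence: `lab t` (for `1 ≤ t ≤ r`) is the index
of the generator `μ_t - μ_(t-1)`. -/
structure SatChain (α : Fin n → M e) (x y : M e) (r : ℕ) : Type where
  pt : ℕ → M e
  lab : ℕ → Fin n
  bot : pt 0 = x
  top : pt r = y
  mem : ∀ t, t ≤ r → pt t ∈ sg α
  step : ∀ t, t < r → pt t + α (lab (t + 1)) = pt (t + 1)
  cov : ∀ t, t < r → ∀ γ ∈ sg α, sgLT α (pt t) γ → sgLT α γ (pt (t + 1)) → False

/-- The monomial `z_i`, i.e. the exponent vector of a single variable. -/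
def lmon (i : Fin n) : Fin n →₀ ℕ := Finsupp.single i 1

/-- The content of a saturated chain: the commutative product of its labels. -/
def chContent {α : Fin n → M e} {x y : M e} {r : ℕ} (F : SatChain α x y r) :
    Fin n →₀ ℕ :=
  ∑ t ∈ Finset.Icc 1 r, lmon (F.lab t)

/-- The facet order: `G < F` iff the content of `G` strictly `⪯`-precedes that
of `F`, or the contents agree and the label sequence of `G` is
lexicographically smaller (labels compared via `⪯`). -/
def facetLT (ord : LinearOrder (Fin n →₀ ℕ)) {α : Fin n → M e} {x y : M e}
    {r' r : ℕ} (G : SatChain α x y r') (F : SatChain α x y r) : Prop :=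
  ord.lt (chContent G) (chContent F) ∨
    (chContent G = chContent F ∧ ∃ t, 1 ≤ t ∧ t ≤ r' ∧ t ≤ r ∧
      (∀ s, 1 ≤ s → s < t → G.lab s = F.lab s) ∧
      ord.lt (lmon (G.lab t)) (lmon (F.lab t)))

/-- The underlying set of poset elements of a saturated chain. -/
def chSet {α : Fin n → M e} {x y : M e} {r : ℕ} (F : SatChain α x y r) :
    Set (M e) :=
  {μ | ∃ t, t ≤ r ∧ F.pt t = μ}

/-- `{t, …, u}` is a skipped set of ranks of `F`: the chain obtained from `F`
by deleting `μ_t, …, μ_u` is contained in a saturated chain `G < F`. -/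
def Skipped (ord : LinearOrder (Fin n →₀ ℕ)) {α : Fin n → M e} {x y : M e}
    {r : ℕ} (F : SatChain α x y r) (t u : ℕ) : Prop :=
  ∃ (r' : ℕ) (G : SatChain α x y r'), facetLT ord G F ∧
    ∀ s, s ≤ r → (s < t ∨ u < s) → F.pt s ∈ chSet G

/-- `{t, …, u}` is a minimal skipped interval of the saturated chain `F`:
a nonempty set of consecutive ranks contained in `{1, …, r-1}` which is a
skipped set and is minimal under inclusion with this property. -/
def MSI (ord : LinearOrder (Fin n →₀ ℕ)) {α : Fin n → M e} {x y : M e}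
    {r : ℕ} (F : SatChain α x y r) (t u : ℕ) : Prop :=
  1 ≤ t ∧ t ≤ u ∧ u ≤ r - 1 ∧ Skipped ord F t u ∧
    ∀ t' u', t ≤ t' → t' ≤ u' → u' ≤ u → Skipped ord F t' u' → t' = t ∧ u' = u

end ASG

namespace ASG

section Aux

variable {e n : ℕ}

/-- Total weight (sum of all coordinates) of an element of `Fin m →₀ ℕ`. -/
def wt {m : ℕ} (μ : Fin m →₀ ℕ) : ℕ := ∑ i, μ i

lemma wt_add {m : ℕ} (a b : Fin m →₀ ℕ) : wt (a + b) = wt a + wt b := by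
  simp [wt, Finset.sum_add_distrib]

lemma wt_pos {m : ℕ} {μ : Fin m →₀ ℕ} (h : μ ≠ 0) : 0 < wt μ := by
  rcases Nat.eq_zero_or_pos (wt μ) with h0 | h0
  · exact absurd (Finsupp.ext fun i => by
      have := (Finset.sum_eq_zero_iff).mp h0 i (Finset.mem_univ i)
      simpa using this) h
  · exact h0

lemma wt_lmon (i : Fin n) : wt (lmon i) = 1 := by
  simp [wt, lmon, Finsupp.single_apply]

lemma wt_sum {β : Type*} (S : Finset β) {m : ℕ} (f : β → Fin m →₀ ℕ) :
    wt (∑ b ∈ S, f b) = ∑ b ∈ S, wt (f b) := by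
  classical
  induction S using Finset.induction with
  | empty => simp [wt]
  | insert _ _ h ih => rw [Finset.sum_insert h, wt_add, ih, Finset.sum_insert h]

lemma wt_pt_mono {α : Fin n → M e} (hα : ∀ i, α i ≠ 0) {x y : M e} {r : ℕ}
    (F : SatChain α x y r) : ∀ b ≤ r, ∀ a ≤ b, wt (F.pt a) + (b - a) ≤ wt (F.pt b) := by
  intro b
  induction b with
  | zero => intro _ a ha; interval_cases a; simp
  | succ b ih =>
    intro hb a hab
    by_cases h : a = b + 1
    · subst h; simp
    · have hab' : a ≤ b := by omega
      have h1 := ih (by omega) a hab'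
      have h2 : wt (F.pt (b + 1)) = wt (F.pt b) + wt (α (F.lab (b + 1))) := by
        rw [← F.step b (by omega), wt_add]
      have h3 := wt_pos (hα (F.lab (b + 1)))
      omega

lemma pt_eq_of_lab_eq {α : Fin n → M e} {x y : M e} {r r' : ℕ}
    (F : SatChain α x y r) (G : SatChain α x y r') {m : ℕ} (hm : m ≤ r) (hm' : m ≤ r')
    (h : ∀ q, 1 ≤ q → q ≤ m → G.lab q = F.lab q) : ∀ q ≤ m, G.pt q = F.pt q := by
  intro q
  induction q with
  | zero => intro _; rw [F.bot, G.bot]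
  | succ q ih =>
    intro hq
    rw [← F.step q (by omega), ← G.step q (by omega), ih (by omega),
      h (q + 1) (by omega) hq]

/-- Splicing two saturated chains of `[x,y]` at a common point:
take `A` up to position `s` and `B` from position `t'` on. -/
def splice {α : Fin n → M e} {x y : M e} {rA rB : ℕ}
    (A : SatChain α x y rA) (B : SatChain α x y rB) (s t' : ℕ)
    (hs : s ≤ rA) (ht : t' ≤ rB) (h : A.pt s = B.pt t') :
    SatChain α x y (s + (rB - t')) where
  pt k := if k ≤ s then A.pt k else B.pt (k - s + t')
  lab k := if k ≤ s then A.lab k else B.lab (k - s + t')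
  bot := by beta_reduce; rw [if_pos (Nat.zero_le s), A.bot]
  top := by
    beta_reduce
    by_cases hc : t' = rB
    · subst hc
      rw [Nat.sub_self, Nat.add_zero, if_pos le_rfl, h, B.top]
    · have h1 : ¬ (s + (rB - t') ≤ s) := by omega
      rw [if_neg h1, show s + (rB - t') - s + t' = rB by omega, B.top]
  mem := by
    intro k hk
    beta_reduce
    by_cases hc : k ≤ s
    · rw [if_pos hc]; exact A.mem k (le_trans hc hs)
    · rw [if_neg hc]; exact B.mem _ (by omega)
  step := by
    intro k hk
    beta_reduce
    by_cases h1 : k + 1 ≤ s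
    · rw [if_pos h1, if_pos (by omega : k ≤ s), if_pos h1]
      exact A.step k (by omega)
    · by_cases h2 : k ≤ s
      · have hks : k = s := by omega
        subst hks
        rw [if_pos h2, if_neg h1, if_neg h1, show k + 1 - k + t' = t' + 1 by omega, h]
        exact B.step t' (by omega)
      · have h3 : ¬ (k + 1 ≤ s) := h1
        rw [if_neg h2, if_neg h3, if_neg h3,
          show k + 1 - s + t' = (k - s + t') + 1 by omega]
        exact B.step (k - s + t') (by omega)
  cov := by
    intro k hk γ hγ hl hr
    beta_reduce at hl hr
    by_cases h1 : k + 1 ≤ s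
    · rw [if_pos (by omega : k ≤ s)] at hl
      rw [if_pos h1] at hr
      exact A.cov k (by omega) γ hγ hl hr
    · by_cases h2 : k ≤ s
      · have hks : k = s := by omega
        subst hks
        rw [if_pos h2, h] at hl
        rw [if_neg h1, show k + 1 - k + t' = t' + 1 by omega] at hr
        exact B.cov t' (by omega) γ hγ hl hr
      · rw [if_neg h2] at hl
        rw [if_neg h1, show k + 1 - s + t' = (k - s + t') + 1 by omega] at hr
        exact B.cov (k - s + t') (by omega) γ hγ hl hr

lemma splice_pt {α : Fin n → M e} {x y : M e} {rA rB : ℕ}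
    (A : SatChain α x y rA) (B : SatChain α x y rB) (s t' : ℕ)
    (hs : s ≤ rA) (ht : t' ≤ rB) (h : A.pt s = B.pt t') (k : ℕ) :
    (splice A B s t' hs ht h).pt k = if k ≤ s then A.pt k else B.pt (k - s + t') := rfl

lemma splice_lab {α : Fin n → M e} {x y : M e} {rA rB : ℕ}
    (A : SatChain α x y rA) (B : SatChain α x y rB) (s t' : ℕ)
    (hs : s ≤ rA) (ht : t' ≤ rB) (h : A.pt s = B.pt t') (k : ℕ) :
    (splice A B s t' hs ht h).lab k = if k ≤ s then A.lab k else B.lab (k - s + t') := rfl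

lemma mem_chSet_splice_left {α : Fin n → M e} {x y : M e} {rA rB : ℕ}
    (A : SatChain α x y rA) (B : SatChain α x y rB) (s t' : ℕ)
    (hs : s ≤ rA) (ht : t' ≤ rB) (h : A.pt s = B.pt t') {k : ℕ} (hk : k ≤ s) :
    A.pt k ∈ chSet (splice A B s t' hs ht h) :=
  ⟨k, by omega, by rw [splice_pt, if_pos hk]⟩

lemma mem_chSet_splice_right {α : Fin n → M e} {x y : M e} {rA rB : ℕ}
    (A : SatChain α x y rA) (B : SatChain α x y rB) (s t' : ℕ)
    (hs : s ≤ rA) (ht : t' ≤ rB) (h : A.pt s = B.pt t') {k : ℕ}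
    (hk1 : t' ≤ k) (hk2 : k ≤ rB) :
    B.pt k ∈ chSet (splice A B s t' hs ht h) := by
  rcases Nat.eq_or_lt_of_le hk1 with he | hlt
  · exact ⟨s, by omega, by rw [splice_pt, if_pos le_rfl, h, he]⟩
  · exact ⟨k - t' + s, by omega,
      by rw [splice_pt, if_neg (by omega), show k - t' + s - s + t' = k by omega]⟩

lemma chContent_split {α : Fin n → M e} {x y : M e} {r : ℕ} (F : SatChain α x y r)
    (m : ℕ) (hm : m ≤ r) :
    chContent F
      = (∑ q ∈ Finset.Ioc 0 m, lmon (F.lab q)) + ∑ q ∈ Finset.Ioc m r, lmon (F.lab q) := by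
  rw [chContent, show (1 : ℕ) = 0 + 1 from rfl, Finset.Icc_add_one_left_eq_Ioc]
  exact (Finset.sum_Ioc_consecutive _ (Nat.zero_le m) hm).symm

lemma chContent_splice {α : Fin n → M e} {x y : M e} {rA rB : ℕ}
    (A : SatChain α x y rA) (B : SatChain α x y rB) (s t' : ℕ)
    (hs : s ≤ rA) (ht : t' ≤ rB) (h : A.pt s = B.pt t') :
    chContent (splice A B s t' hs ht h)
      = (∑ q ∈ Finset.Ioc 0 s, lmon (A.lab q)) + ∑ q ∈ Finset.Ioc t' rB, lmon (B.lab q) := by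
  rw [chContent_split (splice A B s t' hs ht h) s (by omega)]
  congr 1
  · refine Finset.sum_congr rfl fun q hq => ?_
    rw [splice_lab, if_pos (Finset.mem_Ioc.mp hq).2]
  · refine Finset.sum_bij' (fun q _ => q - s + t') (fun q _ => q - t' + s) ?_ ?_ ?_ ?_ ?_
    · intro q hq
      beta_reduce
      rw [Finset.mem_Ioc] at hq ⊢; omega
    · intro q hq
      beta_reduce
      rw [Finset.mem_Ioc] at hq ⊢; omega
    · intro q hq; beta_reduce; rw [Finset.mem_Ioc] at hq; omega
    · intro q hq; beta_reduce; rw [Finset.mem_Ioc] at hq; omega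
    · intro q hq
      beta_reduce
      rw [Finset.mem_Ioc] at hq
      have h1 : ¬ (q ≤ s) := by omega
      rw [splice_lab, if_neg h1]

section OrdLemmas

variable (ord : LinearOrder (Fin n →₀ ℕ))

lemma ole_of_lt {a b : Fin n →₀ ℕ} (h : ord.lt a b) : ord.le a b :=
  ((ord.lt_iff_le_not_ge a b).mp h).1

lemma one_of_lt {a b : Fin n →₀ ℕ} (h : ord.lt a b) : a ≠ b := fun he =>
  ((ord.lt_iff_le_not_ge a b).mp h).2 (he ▸ ord.le_refl a)

lemma olt_of_le_ne {a b : Fin n →₀ ℕ} (h : ord.le a b) (hne : a ≠ b) : ord.lt a b := by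
  rw [ord.lt_iff_le_not_ge]
  exact ⟨h, fun h2 => hne (ord.le_antisymm a b h h2)⟩

lemma olt_trans_le {a b c : Fin n →₀ ℕ} (h1 : ord.lt a b) (h2 : ord.le b c) :
    ord.lt a c := by
  rw [ord.lt_iff_le_not_ge] at h1 ⊢
  exact ⟨ord.le_trans a b c h1.1 h2, fun h3 => h1.2 (ord.le_trans b c a h2 h3)⟩

lemma oadd_lt (hord : IsTermOrder ord) {a b : Fin n →₀ ℕ} (h : ord.lt a b) (c : Fin n →₀ ℕ) :
    ord.lt (a + c) (b + c) :=
  olt_of_le_ne ord (hord.2 a b c (ole_of_lt ord h))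
    (fun he => one_of_lt ord h (add_right_cancel he))

lemma oadd_lt_left (hord : IsTermOrder ord) {a b : Fin n →₀ ℕ} (h : ord.lt a b) (c : Fin n →₀ ℕ) :
    ord.lt (c + a) (c + b) := by
  rw [add_comm c a, add_comm c b]; exact oadd_lt ord hord h c

end OrdLemmas

end Aux

end ASG
open ASG in
/-- Assume the generators are pairwise distinct and fix a
monomial term order `⪯`.  Order the saturated chains of an interval `[x,y]` of
`Λ` by `⪯`-comparison of contents, refined lexicographically.  Then this
ordering satisfies the crossing condition: if `G < F` and the set of ranks of
elements of `F` not lying on `G` is not a set of consecutive integers, then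
there is a saturated chain `G' < F` with `F ∩ G ⊊ F ∩ G'`. -/
theorem content_lex_order_satisfies_crossing_condition
    (e n : ℕ) (α : Fin n → M e) (hα : ∀ i, α i ≠ 0) (hinj : Function.Injective α)
    (ord : LinearOrder (Fin n →₀ ℕ)) (hord : IsTermOrder ord)
    (x y : M e) (hx : x ∈ sg α) (hy : y ∈ sg α) (hxy : sgLE α x y)
    (r r' : ℕ) (F : SatChain α x y r) (G : SatChain α x y r')
    (hGF : facetLT ord G F)
    (hnc : ∃ t t' t'' : ℕ, t < t' ∧ t' < t'' ∧ t'' ≤ r ∧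
      F.pt t ∉ chSet G ∧ F.pt t' ∈ chSet G ∧ F.pt t'' ∉ chSet G) :
    ∃ (r'' : ℕ) (G' : SatChain α x y r''), facetLT ord G' F ∧
      (chSet F ∩ chSet G) ⊂ (chSet F ∩ chSet G') := by
  classical
  obtain ⟨t, t', t'', h1, h2, h3, hFt, hFt', hFt''⟩ := hnc
  obtain ⟨s, hs, hGs⟩ := hFt'
  have ht'r : t' ≤ r := by omega
  set cF1 := ∑ q ∈ Finset.Ioc 0 t', lmon (F.lab q) with hcF1
  set cF2 := ∑ q ∈ Finset.Ioc t' r, lmon (F.lab q) with hcF2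
  set cG1 := ∑ q ∈ Finset.Ioc 0 s, lmon (G.lab q) with hcG1
  set cG2 := ∑ q ∈ Finset.Ioc s r', lmon (G.lab q) with hcG2
  have hcF : chContent F = cF1 + cF2 := chContent_split F t' ht'r
  have hcG : chContent G = cG1 + cG2 := chContent_split G s hs
  set G1 := splice G F s t' hs ht'r hGs with hG1
  set G2 := splice F G t' s ht'r hs hGs.symm with hG2
  have hc1 : chContent G1 = cG1 + cF2 := chContent_splice G F s t' hs ht'r hGs
  have hc2 : chContent G2 = cF1 + cG2 := chContent_splice F G t' s ht'r hs hGs.symm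
  -- subset facts
  have hsub1 : chSet F ∩ chSet G ⊆ chSet F ∩ chSet G1 := by
    rintro ν ⟨⟨a, har, haν⟩, ⟨b, hbr, hbν⟩⟩
    refine ⟨⟨a, har, haν⟩, ?_⟩
    by_cases hbs : b ≤ s
    · rw [← hbν]; exact mem_chSet_splice_left G F s t' hs ht'r hGs hbs
    · have ha : t' ≤ a := by
        by_contra hcon
        have w1 := wt_pt_mono hα G b hbr s (by omega)
        have w2 := wt_pt_mono hα F t' ht'r a (by omega)
        have e1 : wt (G.pt b) = wt (F.pt a) := by rw [haν, hbν]
        have e2 : wt (G.pt s) = wt (F.pt t') := by rw [hGs]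
        omega
      rw [← haν]; exact mem_chSet_splice_right G F s t' hs ht'r hGs ha har
  have hsub2 : chSet F ∩ chSet G ⊆ chSet F ∩ chSet G2 := by
    rintro ν ⟨⟨a, har, haν⟩, ⟨b, hbr, hbν⟩⟩
    refine ⟨⟨a, har, haν⟩, ?_⟩
    by_cases has : a ≤ t'
    · rw [← haν]; exact mem_chSet_splice_left F G t' s ht'r hs hGs.symm has
    · have hb : s ≤ b := by
        by_contra hcon
        have w1 := wt_pt_mono hα F a har t' (by omega)
        have w2 := wt_pt_mono hα G s hs b (by omega)
        have e1 : wt (G.pt b) = wt (F.pt a) := by rw [haν, hbν]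
        have e2 : wt (G.pt s) = wt (F.pt t') := by rw [hGs]
        omega
      rw [← hbν]; exact mem_chSet_splice_right F G t' s ht'r hs hGs.symm hb hbr
  have hmem1 : F.pt t'' ∈ chSet G1 :=
    mem_chSet_splice_right G F s t' hs ht'r hGs (by omega) h3
  have hmem2 : F.pt t ∈ chSet G2 :=
    mem_chSet_splice_left F G t' s ht'r hs hGs.symm (by omega)
  have hss1 : chSet F ∩ chSet G ⊂ chSet F ∩ chSet G1 :=
    (Set.ssubset_iff_of_subset hsub1).mpr
      ⟨F.pt t'', ⟨⟨t'', h3, rfl⟩, hmem1⟩, fun hcon => hFt'' hcon.2⟩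
  have hss2 : chSet F ∩ chSet G ⊂ chSet F ∩ chSet G2 :=
    (Set.ssubset_iff_of_subset hsub2).mpr
      ⟨F.pt t, ⟨⟨t, by omega, rfl⟩, hmem2⟩, fun hcon => hFt hcon.2⟩
  have hle' : ord.le (chContent G) (chContent F) := by
    rcases hGF with h | ⟨he, _⟩
    · exact ole_of_lt ord h
    · rw [he]; exact ord.le_refl _
  by_cases he : cG1 = cF1
  · -- equal first halves : the lengths agree
    have hwF1 : wt cF1 = t' := by
      rw [hcF1, wt_sum]
      simp [wt_lmon, Nat.card_Ioc]
    have hwG1 : wt cG1 = s := by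
      rw [hcG1, wt_sum]
      simp [wt_lmon, Nat.card_Ioc]
    have hst : s = t' := by rw [← hwG1, ← hwF1, he]
    rcases hGF with hltc | ⟨hceq, p, hp1, hpr', hpr, hagree, hplt⟩
    · -- strictly smaller content : splice F then G
      refine ⟨_, G2, Or.inl ?_, hss2⟩
      rw [hc2, ← he, ← hcG]
      exact hltc
    · -- equal content, lex-smaller : splice G then F
      have hps : p ≤ s := by
        by_contra hcon
        have hlabeq : ∀ q, 1 ≤ q → q ≤ s → G.lab q = F.lab q := fun q hq1 hq2 =>
          hagree q hq1 (by omega)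
        have hpt := pt_eq_of_lab_eq F G (m := s) (by omega) hs hlabeq
        exact hFt ⟨t, by omega, hpt t (by omega)⟩
      refine ⟨_, G1, Or.inr ⟨?_, p, hp1, by omega, hpr, ?_, ?_⟩, hss1⟩
      · rw [hc1, hcF, he]
      · intro q hq1 hq2
        rw [hG1, splice_lab, if_pos (by omega : q ≤ s)]
        exact hagree q hq1 hq2
      · rw [hG1, splice_lab, if_pos hps]
        exact hplt
  · rcases ord.le_total cG1 cF1 with hle1 | hle1
    · -- first half of G strictly smaller : splice G then F
      have hlt1 : ord.lt cG1 cF1 := olt_of_le_ne ord hle1 he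
      refine ⟨_, G1, Or.inl ?_, hss1⟩
      rw [hc1, hcF]
      exact oadd_lt ord hord hlt1 cF2
    · -- first half of G strictly bigger : second half must be strictly smaller
      have hlt1 : ord.lt cF1 cG1 := olt_of_le_ne ord hle1 (Ne.symm he)
      have hlt2 : ord.lt cG2 cF2 := by
        by_contra hcon
        have h4 : ord.le cF2 cG2 := by
          rcases ord.le_total cF2 cG2 with h' | h'
          · exact h'
          · rcases eq_or_ne cG2 cF2 with he2 | hne2
            · rw [he2]; exact ord.le_refl _
            · exact absurd (olt_of_le_ne ord h' hne2) hcon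
        have h5 : ord.lt (cF1 + cF2) (cG1 + cF2) := oadd_lt ord hord hlt1 cF2
        have h6 : ord.le (cG1 + cF2) (cG1 + cG2) := by
          rw [add_comm cG1 cF2, add_comm cG1 cG2]
          exact hord.2 cF2 cG2 cG1 h4
        have hle'' : ord.le (cG1 + cG2) (cF1 + cF2) := by rw [← hcG, ← hcF]; exact hle'
        have h7 := olt_trans_le ord (olt_trans_le ord h5 h6) hle''
        exact one_of_lt ord h7 rfl
      refine ⟨_, G2, Or.inl ?_, hss2⟩
      rw [hc2, hcF]
      exact oadd_lt_left ord hord hlt2 cF1
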